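/- A matching M of a finite simple graph G is of maximum cardinality if and only if G contains no M-augmenting path. -/

import Mathlib

open SimpleGraph Finset

variable {V : Type*}

/-- `M` is a matching of `G`: every edge of `M` is an edge of `G` and no two
distinct edges of `M` share a vertex. -/
def IsMatchingF (G : SimpleGraph V) (M : Finset (Sym2 V)) : Prop :=
  (∀ e ∈ M, e ∈ G.edgeSet) ∧
    ∀ e ∈ M, ∀ f ∈ M, e ≠ f → ∀ v : V, v ∈ e → v ∉ f

/-- `v` is unmatched (unsaturated) by the matching `M`. -/
def UnmatchedF (M : Finset (Sym2 V)) (v : V) : Prop := ∀ e ∈ M, v ∉ e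

/-- A list of edges alternates with respect to `M` (consecutive edges differ in
membership in `M`). -/
def AltListF (M : Finset (Sym2 V)) (l : List (Sym2 V)) : Prop :=
  l.Chain' fun e f => (e ∈ M ↔ f ∉ M)

/-- `p` is an `M`-augmenting path: a path alternating w.r.t. `M` whose two
(distinct) endpoints are both `M`-unmatched. -/
def IsAugPathF (G : SimpleGraph V) (M : Finset (Sym2 V)) {u v : V}
    (p : G.Walk u v) : Prop :=
  p.IsPath ∧ u ≠ v ∧ AltListF M p.edges ∧ UnmatchedF M u ∧ UnmatchedF M v

section Helpers

variable {G : SimpleGraph V}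

lemma alt_reverse {M : Finset (Sym2 V)} {l : List (Sym2 V)} (h : AltListF M l) :
    AltListF M l.reverse := by
  rw [AltListF, List.Chain', List.isChain_reverse]
  exact h.imp (fun a b hab => by tauto)

lemma alt_congr {M M' : Finset (Sym2 V)} : ∀ {l : List (Sym2 V)},
    (∀ e ∈ l, (e ∈ M ↔ e ∈ M')) → AltListF M l → AltListF M' l
  | [], _, _ => List.isChain_nil
  | [_], _, _ => List.isChain_singleton _
  | a :: b :: t, hmem, hl => by
      rw [AltListF, List.Chain', List.isChain_cons_cons] at hl ⊢
      refine ⟨?_, alt_congr (fun e he => hmem e (List.mem_cons_of_mem _ he)) hl.2⟩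
      have ha := hmem a (by simp)
      have hb := hmem b (by simp)
      tauto

lemma aug_reverse {M : Finset (Sym2 V)} {u v : V}
    {p : G.Walk u v} (h : IsAugPathF G M p) : IsAugPathF G M p.reverse := by
  obtain ⟨hp, huv, halt, hu, hv⟩ := h
  exact ⟨hp.reverse, huv.symm, by rw [SimpleGraph.Walk.edges_reverse]; exact alt_reverse halt,
    hv, hu⟩

lemma mem_support_of_mem_edge {u v : V} {p : G.Walk u v} {e : Sym2 V}
    (he : e ∈ p.edges) {w : V} (hw : w ∈ e) : w ∈ p.support := by
  induction e with
  | _ a b =>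
    rw [Sym2.mem_iff] at hw
    rcases hw with rfl | rfl
    · exact Walk.fst_mem_support_of_mem_edges p he
    · exact Walk.snd_mem_support_of_mem_edges p he

lemma walk_length_ne_zero {u v : V} (p : G.Walk u v) (h : u ≠ v) : p.length ≠ 0 := by
  cases p with
  | nil => exact absurd rfl h
  | cons _ _ => simp

lemma support_mem_edge {u v : V} (p : G.Walk u v) (h : p.length ≠ 0) :
    ∀ w ∈ p.support, ∃ e ∈ p.edges, w ∈ e := by
  induction p with
  | nil => simp at h
  | @cons u x v hadj q ih =>
    intro w hw
    rw [Walk.support_cons, List.mem_cons] at hw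
    rcases hw with rfl | hw
    · exact ⟨s(w, x), by simp, by simp⟩
    · by_cases hq : q.length = 0
      · cases q with
        | nil => simp at hw; subst hw; exact ⟨s(u, w), by simp, by simp⟩
        | cons _ _ => simp [Walk.length_cons] at hq
      · obtain ⟨e, he, hwe⟩ := ih hq w hw
        exact ⟨e, by simp [he], hwe⟩

lemma edge_start {u v : V} {p : G.Walk u v} (hp : p.IsPath) {e : Sym2 V}
    (he : e ∈ p.edges) (hu : u ∈ e) :
    ∃ (x : V) (h : G.Adj u x) (q : G.Walk x v), p = Walk.cons h q ∧ e = s(u, x) := by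
  cases p with
  | nil => simp at he
  | @cons u x v hadj q =>
    rw [Walk.edges_cons, List.mem_cons] at he
    rcases he with rfl | he
    · exact ⟨x, hadj, q, rfl, rfl⟩
    · exfalso
      rw [Walk.cons_isPath_iff] at hp
      exact hp.2 (mem_support_of_mem_edge he hu)

lemma consec {M : Finset (Sym2 V)} {u v : V} (p : G.Walk u v) (hp : p.IsPath)
    (halt : AltListF M p.edges) :
    ∀ e₁ ∈ p.edges, ∀ e₂ ∈ p.edges, e₁ ≠ e₂ → ∀ w, w ∈ e₁ → w ∈ e₂ →
      (e₁ ∈ M ↔ e₂ ∉ M) := by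
  induction p with
  | nil => simp
  | @cons u x v hadj q ih =>
    intro e₁ he₁ e₂ he₂ hne w hw₁ hw₂
    rw [Walk.edges_cons, List.mem_cons] at he₁ he₂
    have hq : q.IsPath := ((Walk.cons_isPath_iff _ _).mp hp).1
    have hnotu : u ∉ q.support := ((Walk.cons_isPath_iff _ _).mp hp).2
    have haltq : AltListF M q.edges := halt.tail
    have key : ∀ e ∈ q.edges, ∀ w, w ∈ s(u, x) → w ∈ e → (s(u, x) ∈ M ↔ e ∉ M) := by
      intro e he w hwf hwe
      rw [Sym2.mem_iff] at hwf
      rcases hwf with rfl | rfl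
      · exact absurd (mem_support_of_mem_edge he hwe) hnotu
      · obtain ⟨y, hady, r, rfl, rfl⟩ := edge_start hq he hwe
        rw [Walk.edges_cons] at halt
        rw [Walk.edges_cons] at halt
        exact (List.isChain_cons_cons.mp halt).1
    rcases he₁ with rfl | he₁ <;> rcases he₂ with rfl | he₂
    · exact absurd rfl hne
    · exact key e₂ he₂ w hw₁ hw₂
    · have := key e₁ he₁ w hw₂ hw₁
      tauto
    · exact ih hq haltq e₁ he₁ e₂ he₂ hne w hw₁ hw₂

lemma internal {M : Finset (Sym2 V)} {u v : V} (p : G.Walk u v) (hp : p.IsPath)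
    (halt : AltListF M p.edges) :
    ∀ w ∈ p.support, w ≠ u → w ≠ v → ∃ g ∈ M, g ∈ p.edges ∧ w ∈ g := by
  induction p with
  | nil => intro w hw; simp at hw; intro h; exact absurd hw h
  | @cons u x v hadj q ih =>
    intro w hw hwu hwv
    rw [Walk.support_cons, List.mem_cons] at hw
    rcases hw with rfl | hw
    · exact absurd rfl hwu
    have hq : q.IsPath := ((Walk.cons_isPath_iff _ _).mp hp).1
    have haltq : AltListF M q.edges := halt.tail
    by_cases hwx : w = x
    · subst hwx
      by_cases hf : s(u, w) ∈ M
      · exact ⟨s(u, w), hf, by simp, by simp⟩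
      · cases q with
        | nil => exact absurd rfl hwv
        | @cons _ y _ hady r =>
          have hrel : (s(u, w) ∈ M ↔ s(w, y) ∉ M) := by
            rw [Walk.edges_cons, Walk.edges_cons] at halt
            exact (List.isChain_cons_cons.mp halt).1
          have : s(w, y) ∈ M := by tauto
          exact ⟨s(w, y), this, by simp, by simp⟩
    · obtain ⟨g, hg, hge, hwg⟩ := ih hq haltq w hw hwx hwv
      exact ⟨g, hg, by simp [hge], hwg⟩

lemma alt_count [DecidableEq V] {M : Finset (Sym2 V)} :
    ∀ l : List (Sym2 V), AltListF M l →
      (∀ e, l.head? = some e → e ∉ M) → (∀ e, l.getLast? = some e → e ∉ M) →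
      l ≠ [] →
      l.countP (fun e => e ∈ M) + 1 = l.countP (fun e => e ∉ M)
  | [], _, _, _, hne => absurd rfl hne
  | [e], _, hh, _, _ => by
      have he : e ∉ M := hh e rfl
      rw [List.countP_singleton, List.countP_singleton]; simp [he]
  | e :: f :: t, halt, hh, hl, _ => by
      have he : e ∉ M := hh e rfl
      have hf : f ∈ M := by
        have := (List.isChain_cons_cons.mp halt).1; tauto
      have halt' : AltListF M (f :: t) := halt.tail
      cases t with
      | nil =>
        exfalso
        exact hl f (by simp [List.getLast?]) hf
      | cons g t' =>
        have hg : g ∉ M := by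
          have := (List.isChain_cons_cons.mp halt').1; tauto
        have ih := alt_count (g :: t') halt'.tail (by rintro e' ⟨rfl⟩; exact hg)
          (fun e' h' => hl e' (by rw [← h']; simp [List.getLast?_cons_cons])) (by simp)
        simp only [List.countP_cons] at ih ⊢
        simp only [he, hf, decide_eq_true_eq, if_pos, if_neg, not_true, not_false_iff] at *
        omega

def matchedVerts [Fintype V] [DecidableEq V] (M : Finset (Sym2 V)) : Finset V :=
  univ.filter (fun v => ∃ e ∈ M, v ∈ e)

lemma card_matchedVerts [Fintype V] [DecidableEq V] {M : Finset (Sym2 V)}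
    (hM : IsMatchingF G M) : (matchedVerts M).card = 2 * M.card := by
  have : matchedVerts M = M.biUnion (fun e => univ.filter (· ∈ e)) := by
    ext v; simp [matchedVerts]
  rw [this, card_biUnion]
  · rw [Finset.sum_congr rfl (g := fun _ => 2), Finset.sum_const, smul_eq_mul, mul_comm]
    intro e he
    induction e using Sym2.ind with | _ a b => ?_
    have hab : a ≠ b := by
      intro h; subst h
      exact G.irrefl (hM.1 _ he)
    have : univ.filter (· ∈ s(a, b)) = {a, b} := by
      ext v; simp [Sym2.mem_iff]
    rw [this, card_insert_of_notMem (by simp [hab]), card_singleton]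
  · intro e he f hf hef
    rw [Function.onFun, Finset.disjoint_left]
    intro v hv hv'
    simp only [mem_filter] at hv hv'
    exact hM.2 e he f hf hef v hv.2 hv'.2

/-- Transfer an augmenting path along a subgraph relation. -/
lemma aug_of_le {H : SimpleGraph V} (hle : H ≤ G) {M : Finset (Sym2 V)} {a b : V}
    (p : H.Walk a b) (hp : p.IsPath) (hab : a ≠ b) (halt : AltListF M p.edges)
    (ha : UnmatchedF M a) (hb : UnmatchedF M b) :
    ∃ (u v : V) (q : G.Walk u v), IsAugPathF G M q := by
  refine ⟨a, b, p.transfer G (fun e he => edgeSet_mono hle (p.edges_subset_edgeSet he)), ?_⟩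
  refine ⟨hp.transfer _, hab, ?_, ha, hb⟩
  rw [Walk.edges_transfer]
  exact halt

end Helpers
section Key

variable {G : SimpleGraph V}

lemma key_lemma [Fintype V] [DecidableEq V] :
    ∀ (n : ℕ) (G : SimpleGraph V) (M N : Finset (Sym2 V)), M.card + N.card ≤ n →
      IsMatchingF G M → IsMatchingF G N → M.card < N.card →
      ∃ (u v : V) (p : G.Walk u v), IsAugPathF G M p := by
  intro n
  induction n with
  | zero => intro G M N hsum _ _ hlt; omega
  | succ n ih =>
    intro G M N hsum hM hN hlt
    by_cases hint : (M ∩ N).Nonempty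
    · -- Case 1: common edge, delete its endpoints' incident edges
      obtain ⟨e, he⟩ := hint
      rw [mem_inter] at he
      obtain ⟨heM, heN⟩ := he
      induction e using Sym2.ind with | _ a b => ?_
      set S : Set (Sym2 V) := {f | a ∈ f ∨ b ∈ f} with hS
      set G' := G.deleteEdges S with hG'
      have hedge : ∀ f ∈ G'.edgeSet, a ∉ f ∧ b ∉ f := by
        intro f hf
        rw [hG', edgeSet_deleteEdges] at hf
        have := hf.2
        simp only [hS, Set.mem_setOf_eq] at this
        push_neg at this
        exact this
      have hM' : IsMatchingF G' (M.erase s(a, b)) := by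
        constructor
        · intro f hf
          rw [mem_erase] at hf
          rw [hG', edgeSet_deleteEdges]
          refine ⟨hM.1 _ hf.2, ?_⟩
          simp only [hS, Set.mem_setOf_eq]
          push_neg
          exact ⟨fun h => hM.2 _ hf.2 _ heM hf.1 a h (by simp),
                 fun h => hM.2 _ hf.2 _ heM hf.1 b h (by simp)⟩
        · intro f hf g hg hfg v hv
          exact hM.2 f (mem_of_mem_erase hf) g (mem_of_mem_erase hg) hfg v hv
      have hN' : IsMatchingF G' (N.erase s(a, b)) := by
        constructor
        · intro f hf
          rw [mem_erase] at hf
          rw [hG', edgeSet_deleteEdges]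
          refine ⟨hN.1 _ hf.2, ?_⟩
          simp only [hS, Set.mem_setOf_eq]
          push_neg
          exact ⟨fun h => hN.2 _ hf.2 _ heN hf.1 a h (by simp),
                 fun h => hN.2 _ hf.2 _ heN hf.1 b h (by simp)⟩
        · intro f hf g hg hfg v hv
          exact hN.2 f (mem_of_mem_erase hf) g (mem_of_mem_erase hg) hfg v hv
      have hcM : (M.erase s(a, b)).card = M.card - 1 := card_erase_of_mem heM
      have hcN : (N.erase s(a, b)).card = N.card - 1 := card_erase_of_mem heN
      have hMpos : 1 ≤ M.card := card_pos.mpr ⟨_, heM⟩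
      have hNpos : 1 ≤ N.card := card_pos.mpr ⟨_, heN⟩
      obtain ⟨u, v, p, hp, huv, halt, hu, hv⟩ :=
        ih G' (M.erase s(a, b)) (N.erase s(a, b)) (by omega) hM' hN' (by omega)
      -- endpoints and edges avoid a and b
      have hpedge : ∀ f ∈ p.edges, a ∉ f ∧ b ∉ f :=
        fun f hf => hedge f (p.edges_subset_edgeSet hf)
      have hsupp : ∀ w ∈ p.support, w ≠ a ∧ w ≠ b := by
        intro w hw
        obtain ⟨f, hf, hwf⟩ := support_mem_edge p (walk_length_ne_zero p huv) w hw
        obtain ⟨hfa, hfb⟩ := hpedge f hf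
        exact ⟨fun h => hfa (h ▸ hwf), fun h => hfb (h ▸ hwf)⟩
      have hcong : ∀ f ∈ p.edges, (f ∈ M.erase s(a, b) ↔ f ∈ M) := by
        intro f hf
        rw [mem_erase]
        have := (hpedge f hf).1
        constructor
        · exact fun h => h.2
        · intro h
          refine ⟨fun heq => ?_, h⟩
          subst heq; exact this (by simp)
      have hunmatch : ∀ w, UnmatchedF (M.erase s(a, b)) w → w ≠ a → w ≠ b →
          UnmatchedF M w := by
        intro w hw hwa hwb g hg
        by_cases hge : g = s(a, b)
        · subst hge
          rw [Sym2.mem_iff]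
          push_neg
          exact ⟨hwa, hwb⟩
        · exact hw g (mem_erase_of_ne_of_mem hge hg)
      have hus := hsupp u p.start_mem_support
      have hvs := hsupp v p.end_mem_support
      exact aug_of_le (deleteEdges_le S) p hp huv (alt_congr hcong halt)
        (hunmatch u hu hus.1 hus.2) (hunmatch v hv hvs.1 hvs.2)
    · -- Case 2: M and N disjoint
      have hdisj : ∀ f ∈ M, f ∉ N := by
        intro f hf hfN
        exact hint ⟨f, mem_inter.mpr ⟨hf, hfN⟩⟩
      -- find a vertex matched by N, unmatched by M
      have hns : ¬ matchedVerts (V := V) N ⊆ matchedVerts M := by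
        intro hsub
        have := card_le_card hsub
        rw [card_matchedVerts (G := G) hN, card_matchedVerts (G := G) hM] at this
        omega
      obtain ⟨u, huN, huM⟩ := not_subset.mp hns
      simp only [matchedVerts, mem_filter, mem_univ, true_and] at huN huM
      push_neg at huM
      obtain ⟨e, heN, hue⟩ := huN
      obtain ⟨w, rfl⟩ := Sym2.mem_iff_exists.mp hue
      have huw : u ≠ w := fun h => G.irrefl (h ▸ hN.1 _ heN)
      have hadjuw : G.Adj u w := (mem_edgeSet _).mp (hN.1 _ heN)
      have huM' : UnmatchedF M u := fun g hg => huM g hg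
      by_cases hw : ∃ f ∈ M, w ∈ f
      · obtain ⟨f, hfM, hwf⟩ := hw
        obtain ⟨x, rfl⟩ := Sym2.mem_iff_exists.mp hwf
        have hwx : w ≠ x := fun h => G.irrefl (h ▸ hM.1 _ hfM)
        have hadjwx : G.Adj w x := (mem_edgeSet _).mp (hM.1 _ hfM)
        have hxu : x ≠ u := by
          intro h; subst h
          exact huM' _ hfM (by simp)
        have hfe : s(w, x) ≠ s(u, w) := by
          intro h
          rw [Sym2.eq_iff] at h
          rcases h with ⟨h1, _⟩ | ⟨_, h2⟩
          · exact huw h1.symm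
          · exact hxu h2
        have hfM'' : s(u, w) ∉ M := by
          intro h
          exact huM' _ h (by simp)
        set S : Set (Sym2 V) := {g | u ∈ g ∨ w ∈ g} with hS
        set G' := G.deleteEdges S with hG'
        have hedge : ∀ g ∈ G'.edgeSet, u ∉ g ∧ w ∉ g := by
          intro g hg
          rw [hG', edgeSet_deleteEdges] at hg
          have := hg.2
          simp only [hS, Set.mem_setOf_eq] at this
          push_neg at this
          exact this
        set M' := M.erase s(w, x) with hM'def
        set N' := N.erase s(u, w) with hN'def
        have hM' : IsMatchingF G' M' := by
          constructor
          · intro g hg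
            rw [hM'def, mem_erase] at hg
            rw [hG', edgeSet_deleteEdges]
            refine ⟨hM.1 _ hg.2, ?_⟩
            simp only [hS, Set.mem_setOf_eq]; push_neg
            exact ⟨fun h => huM' _ hg.2 h,
                   fun h => hM.2 _ hg.2 _ hfM hg.1 w h (by simp)⟩
          · intro f' hf' g hg hfg v hv
            exact hM.2 f' (mem_of_mem_erase hf') g (mem_of_mem_erase hg) hfg v hv
        have hN' : IsMatchingF G' N' := by
          constructor
          · intro g hg
            rw [hN'def, mem_erase] at hg
            rw [hG', edgeSet_deleteEdges]
            refine ⟨hN.1 _ hg.2, ?_⟩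
            simp only [hS, Set.mem_setOf_eq]; push_neg
            exact ⟨fun h => hN.2 _ hg.2 _ heN hg.1 u h (by simp),
                   fun h => hN.2 _ hg.2 _ heN hg.1 w h (by simp)⟩
          · intro f' hf' g hg hfg v hv
            exact hN.2 f' (mem_of_mem_erase hf') g (mem_of_mem_erase hg) hfg v hv
        have hcM : M'.card = M.card - 1 := card_erase_of_mem hfM
        have hcN : N'.card = N.card - 1 := card_erase_of_mem heN
        have hMpos : 1 ≤ M.card := card_pos.mpr ⟨_, hfM⟩
        have hNpos : 1 ≤ N.card := card_pos.mpr ⟨_, heN⟩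
        obtain ⟨a, b, p, haug⟩ := ih G' M' N' (by omega) hM' hN' (by omega)
        -- properties shared by any aug path in G'
        have hpfacts : ∀ (a b : V) (p : G'.Walk a b), IsAugPathF G' M' p →
            (∀ g ∈ p.edges, u ∉ g ∧ w ∉ g) ∧ (∀ z ∈ p.support, z ≠ u ∧ z ≠ w) := by
          intro a b p haug
          have hpe : ∀ g ∈ p.edges, u ∉ g ∧ w ∉ g :=
            fun g hg => hedge g (p.edges_subset_edgeSet hg)
          refine ⟨hpe, ?_⟩
          intro z hz
          obtain ⟨g, hg, hzg⟩ := support_mem_edge p (walk_length_ne_zero p haug.2.1) z hz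
          obtain ⟨hgu, hgw⟩ := hpe g hg
          exact ⟨fun h => hgu (h ▸ hzg), fun h => hgw (h ▸ hzg)⟩
        have hcong : ∀ {a b : V} (p : G'.Walk a b), IsAugPathF G' M' p →
            ∀ g ∈ p.edges, (g ∈ M' ↔ g ∈ M) := by
          intro a b p haug g hg
          have hgw := ((hpfacts a b p haug).1 g hg).2
          rw [hM'def, mem_erase]
          constructor
          · exact fun h => h.2
          · intro h
            refine ⟨fun heq => hgw (heq ▸ (by simp : w ∈ s(w, x))), h⟩
        -- main construction, assuming endpoint x is at position b if at all
        have main : ∀ (a b : V) (p : G'.Walk a b), IsAugPathF G' M' p →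
            (b = x ∨ (a ≠ x ∧ b ≠ x)) →
            ∃ (c d : V) (q : G.Walk c d), IsAugPathF G M q := by
          intro a b p haug hcase
          obtain ⟨hp, hab, halt, ha, hb⟩ := haug
          obtain ⟨hpe, hps⟩ := hpfacts a b p ⟨hp, hab, halt, ha, hb⟩
          have hMM' : ∀ z, z ≠ w → z ≠ x → UnmatchedF M' z → UnmatchedF M z := by
            intro z hzw hzx hz g hg
            by_cases hge : g = s(w, x)
            · subst hge
              rw [Sym2.mem_iff]; push_neg; exact ⟨hzw, hzx⟩
            · exact hz g (mem_erase_of_ne_of_mem hge hg)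
          rcases hcase with rfl | ⟨hax, hbx⟩
          · -- b = x : extend the path by edges f and e
            -- work with the reversed path from x
            have haug2 : IsAugPathF G' M' p.reverse := aug_reverse ⟨hp, hab, halt, ha, hb⟩
            -- destructure the reversed walk
            cases hrev : p.reverse with
            | nil => exact absurd rfl hab
            | @cons _ y _ hadj r =>
              rw [hrev] at haug2
              obtain ⟨hp', hab', halt', hx', ha'⟩ := haug2
              -- first edge of reversed path
              have hbyp : s(b, y) ∈ p.edges := by
                have : s(b, y) ∈ p.reverse.edges := by rw [hrev]; simp
                rw [Walk.edges_reverse, List.mem_reverse] at this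
                exact this
              have hfirstne : s(b, y) ∉ M := by
                intro hmem
                have h1 : s(b, y) ≠ s(w, b) := by
                  intro h
                  have hwby : w ∈ s(b, y) := h ▸ (by simp)
                  exact (hpe s(b, y) hbyp).2 hwby
                exact hx' _ (mem_erase_of_ne_of_mem h1 hmem) (by simp)
              -- build the new walk
              have hrG : ∀ g ∈ (Walk.cons hadj r).edges, g ∈ G.edgeSet := by
                intro g hg
                exact edgeSet_mono (deleteEdges_le S) ((Walk.cons hadj r).edges_subset_edgeSet hg)
              set rr := (Walk.cons hadj r).transfer G hrG with hrr
              refine ⟨u, a, Walk.cons hadjuw (Walk.cons hadjwx rr), ?_, ?_, ?_, ?_, ?_⟩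
              · -- IsPath
                rw [Walk.cons_isPath_iff, Walk.cons_isPath_iff]
                have hsupp' : rr.support = (Walk.cons hadj r).support := Walk.support_transfer _ _
                have hsub : ∀ z ∈ (Walk.cons hadj r).support, z ≠ u ∧ z ≠ w := by
                  intro z hz
                  rw [← hrev] at hz
                  rw [Walk.support_reverse] at hz
                  exact hps z (List.mem_reverse.mp hz)
                refine ⟨⟨hp'.transfer _, ?_⟩, ?_⟩
                · rw [hsupp']
                  intro h
                  exact (hsub w h).2 rfl
                · rw [Walk.support_cons, hsupp']
                  intro h
                  rcases List.mem_cons.mp h with h | h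
                  · exact huw h
                  · exact (hsub u h).1 rfl
              · -- u ≠ a
                intro h
                exact (hps a p.start_mem_support).1 h.symm
              · -- alternation
                have hedges : (Walk.cons hadjuw (Walk.cons hadjwx rr)).edges
                    = s(u, w) :: s(w, b) :: (Walk.cons hadj r).edges := by
                  rw [Walk.edges_cons, Walk.edges_cons, hrr, Walk.edges_transfer]
                rw [hedges, Walk.edges_cons]
                rw [AltListF, List.Chain', List.isChain_cons_cons, List.isChain_cons_cons]
                refine ⟨⟨fun h => absurd h hfM'', fun h => absurd hfM h⟩, ?_, ?_⟩
                · exact ⟨fun _ => hfirstne, fun _ => hfM⟩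
                · -- chain on s(b,y) :: r.edges, w.r.t. M
                  have : AltListF M (Walk.cons hadj r).edges := by
                    apply alt_congr (M := M') _ halt'
                    intro g hg
                    exact hcong (Walk.cons hadj r) ⟨hp', hab', halt', hx', ha'⟩ g hg
                  rw [Walk.edges_cons] at this
                  exact this
              · exact huM'
              · -- UnmatchedF M a
                have haw : a ≠ w := (hps a p.start_mem_support).2
                exact hMM' a haw (fun h => hab h) ha
          · -- x not an endpoint: transfer directly
            have hMa : UnmatchedF M a := by
              refine hMM' a (hps a p.start_mem_support).2 hax ha
            have hMb : UnmatchedF M b := by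
              refine hMM' b (hps b p.end_mem_support).2 hbx hb
            exact aug_of_le (deleteEdges_le S) p hp hab
              (alt_congr (hcong p ⟨hp, hab, halt, ha, hb⟩) halt) hMa hMb
        by_cases hbx : b = x
        · exact main a b p haug (Or.inl hbx)
        · by_cases hax : a = x
          · exact main b a p.reverse (aug_reverse haug) (Or.inl hax)
          · exact main a b p haug (Or.inr ⟨hax, hbx⟩)
      · -- w is unmatched by M : single edge augmenting path
        push_neg at hw
        refine ⟨u, w, Walk.cons hadjuw Walk.nil, ?_, huw, ?_, huM', fun g hg => hw g hg⟩
        · rw [Walk.cons_isPath_iff]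
          exact ⟨Walk.IsPath.nil, by simp [huw]⟩
        · simp [AltListF, List.Chain', List.isChain_singleton]

end Key
section Augment

variable {G : SimpleGraph V}

lemma head_mem_first_edge {u v : V} (p : G.Walk u v) :
    ∀ e, p.edges.head? = some e → u ∈ e := by
  cases p with
  | nil => simp
  | cons h q => rintro e he; rw [Walk.edges_cons] at he; injection he with he; subst he; simp

lemma augment [DecidableEq V] {M : Finset (Sym2 V)} {u v : V} (p : G.Walk u v)
    (hM : IsMatchingF G M) (haug : IsAugPathF G M p) :
    ∃ N : Finset (Sym2 V), IsMatchingF G N ∧ N.card = M.card + 1 := by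
  classical
  obtain ⟨hp, huv, halt, hu, hv⟩ := haug
  set P : Finset (Sym2 V) := p.edges.toFinset with hP
  set N : Finset (Sym2 V) := (M \ P) ∪ (P \ M) with hN
  have hnodup : p.edges.Nodup := hp.isTrail.edges_nodup
  have hmemP : ∀ e, e ∈ P ↔ e ∈ p.edges := by intro e; rw [hP, List.mem_toFinset]
  -- head/last edges not in M
  have hhead : ∀ e, p.edges.head? = some e → e ∉ M := by
    intro e he hmem
    exact hu e hmem (head_mem_first_edge p e he)
  have hlast : ∀ e, p.edges.getLast? = some e → e ∉ M := by
    intro e he hmem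
    have : p.reverse.edges.head? = some e := by
      rw [Walk.edges_reverse, List.head?_reverse]; exact he
    exact hv e hmem (head_mem_first_edge p.reverse e this)
  have hne : p.edges ≠ [] := by
    cases p with
    | nil => exact absurd rfl huv
    | cons _ _ => simp
  have hcount := alt_count p.edges halt hhead hlast hne
  -- cardinalities
  have hfin : ∀ (q : Sym2 V → Prop) [DecidablePred q],
      (P.filter q).card = p.edges.countP (fun a => q a) := by
    intro q _
    have h2 : P.filter q = (p.edges.filter (fun a => decide (q a))).toFinset := by
      ext e; simp [hP, List.mem_filter]
    rw [h2, List.card_toFinset, List.Nodup.dedup (hnodup.filter _),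
      List.countP_eq_length_filter]
  have hMP : (M ∩ P).card = p.edges.countP (fun e => e ∈ M) := by
    have h1 : M ∩ P = P.filter (fun e => e ∈ M) := by
      ext e; simp [hmemP e, and_comm]
    rw [h1, hfin]
  have hPM : (P \ M).card = p.edges.countP (fun e => e ∉ M) := by
    have h1 : P \ M = P.filter (fun e => e ∉ M) := by
      ext e; simp [hmemP e]
    rw [h1, hfin]
  have hinter : (M ∩ P).card ≤ M.card := card_le_card (inter_subset_left)
  have hsdiff : (M \ P).card + (M ∩ P).card = M.card := card_sdiff_add_card_inter _ _
  have hdisj : Disjoint (M \ P) (P \ M) := by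
    rw [Finset.disjoint_left]
    intro e he he'
    exact (mem_sdiff.mp he').2 (mem_sdiff.mp he).1
  have hcard : N.card = M.card + 1 := by
    rw [hN, card_union_of_disjoint hdisj, hPM]
    omega
  refine ⟨N, ⟨?_, ?_⟩, hcard⟩
  · intro e he
    rcases mem_union.mp he with h | h
    · exact hM.1 _ (mem_sdiff.mp h).1
    · exact p.edges_subset_edgeSet ((hmemP e).mp (mem_sdiff.mp h).1)
  · -- disjointness of the new matching
    intro e he f hf hef z hze hzf
    rcases mem_union.mp he with he | he <;> rcases mem_union.mp hf with hf | hf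
    · exact hM.2 e (mem_sdiff.mp he).1 f (mem_sdiff.mp hf).1 hef z hze hzf
    · -- e ∈ M \ P, f ∈ P \ M
      obtain ⟨heM, heP⟩ := mem_sdiff.mp he
      obtain ⟨hfP, hfM⟩ := mem_sdiff.mp hf
      have hzsupp : z ∈ p.support := mem_support_of_mem_edge ((hmemP f).mp hfP) hzf
      by_cases hzu : z = u
      · subst hzu; exact hu e heM hze
      by_cases hzv : z = v
      · subst hzv; exact hv e heM hze
      obtain ⟨g, hgM, hgP, hzg⟩ := internal p hp halt z hzsupp hzu hzv
      have hge : g ≠ e := fun h => heP ((hmemP e).mpr (h ▸ hgP))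
      exact hM.2 g hgM e heM hge z hzg hze
    · -- e ∈ P \ M, f ∈ M \ P (symmetric)
      obtain ⟨heP, heM⟩ := mem_sdiff.mp he
      obtain ⟨hfM, hfP⟩ := mem_sdiff.mp hf
      have hzsupp : z ∈ p.support := mem_support_of_mem_edge ((hmemP e).mp heP) hze
      by_cases hzu : z = u
      · subst hzu; exact hu f hfM hzf
      by_cases hzv : z = v
      · subst hzv; exact hv f hfM hzf
      obtain ⟨g, hgM, hgP, hzg⟩ := internal p hp halt z hzsupp hzu hzv
      have hge : g ≠ f := fun h => hfP ((hmemP f).mpr (h ▸ hgP))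
      exact hM.2 g hgM f hfM hge z hzg hzf
    · -- both in P \ M
      obtain ⟨heP, heM⟩ := mem_sdiff.mp he
      obtain ⟨hfP, hfM⟩ := mem_sdiff.mp hf
      have := consec p hp halt e ((hmemP e).mp heP) f ((hmemP f).mp hfP) hef z hze hzf
      tauto

end Augment

theorem stmt_1 [Fintype V] [DecidableEq V] (G : SimpleGraph V)
    (M : Finset (Sym2 V)) (hM : IsMatchingF G M) :
    (∀ N : Finset (Sym2 V), IsMatchingF G N → N.card ≤ M.card) ↔
      ¬∃ (u v : V) (p : G.Walk u v), IsAugPathF G M p := by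
  constructor
  · rintro hmax ⟨u, v, p, haug⟩
    obtain ⟨N, hN, hcard⟩ := augment p hM haug
    have := hmax N hN
    omega
  · intro hno N hN
    by_contra h
    push_neg at h
    exact hno (key_lemma (M.card + N.card) G M N le_rfl hM hN h)
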